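/- arXiv:2112.15497 — 2 statements merged into one kernel-verified Lean document; each statement's English description precedes it below -/
import Mathlib

section
/- Let X be a real normed space, let C₁ > 0, let N be a natural number, and let u : (0,1] → X be a net satisfying ‖u(ε)‖ ≤ C₁ · ε^(−N) for all ε ∈ (0,1]. Define the reparametrisation μ(ε) = 1/(log(log(1/ε))). Then there exists ε₁ ∈ (0, e^(−e)) such that for all ε ∈ (0, ε₁) one has μ(ε) ∈ (0,1] and ‖u(μ(ε))‖ ≤ C₁ · log(1/ε); that is, the reparametrised net (u(μ(ε)))_ε is X-moderate of log-type even when the moderateness exponent N is unknown. -/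
open Set

/-- **Log-type reparametrisation of a moderate net (unknown exponent).**
If `u : (0,1] → X` satisfies `‖u ε‖ ≤ C₁ ε^{-N}`, then the reparametrised net
`ε ↦ u (1 / log (log (1/ε)))` is moderate of log-type with the same constant
`C₁`, for all sufficiently small `ε`. -/
theorem log_type_reparametrisation_unknown_exponent
    (X : Type*) [NormedAddCommGroup X]
    (C₁ : ℝ) (hC₁ : 0 < C₁) (N : ℕ)
    (u : ℝ → X)
    (hu : ∀ ε ∈ Set.Ioc (0 : ℝ) 1, ‖u ε‖ ≤ C₁ * ε ^ (-(N : ℝ))) :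
    ∃ ε₁ ∈ Set.Ioo (0 : ℝ) (Real.exp (-(Real.exp 1))),
      ∀ ε ∈ Set.Ioo (0 : ℝ) ε₁,
        1 / Real.log (Real.log (1 / ε)) ∈ Set.Ioc (0 : ℝ) 1 ∧
        ‖u (1 / Real.log (Real.log (1 / ε)))‖ ≤ C₁ * Real.log (1 / ε) := by
  -- (log x)^N ≤ x eventually
  have hlo : ∀ᶠ x in Filter.atTop, ‖Real.log x ^ N‖ ≤ 1 * ‖id x‖ :=
    (Real.isLittleO_pow_log_id_atTop (n := N)).bound one_pos
  rw [Filter.eventually_atTop] at hlo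
  obtain ⟨M, hM⟩ := hlo
  set T : ℝ := max M (Real.exp 1) + 1 with hT
  have hTe : Real.exp 1 < T := lt_of_le_of_lt (le_max_right _ _) (lt_add_one _)
  have hTM : M ≤ T := le_of_lt (lt_of_le_of_lt (le_max_left _ _) (lt_add_one _))
  have hT0 : (0:ℝ) < T := lt_trans (Real.exp_pos 1) hTe
  refine ⟨Real.exp (-T), ⟨Real.exp_pos _, Real.exp_lt_exp.2 (by linarith)⟩, ?_⟩
  intro ε ⟨hε0, hεT⟩
  have hL : T < Real.log (1 / ε) := by
    rw [Real.log_div one_ne_zero (ne_of_gt hε0), Real.log_one]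
    have h : Real.log ε < -T := by
      rw [← Real.log_exp (-T)]; exact Real.log_lt_log hε0 hεT
    linarith
  set L : ℝ := Real.log (1 / ε) with hLdef
  have hL0 : (0:ℝ) < L := lt_trans hT0 hL
  have hlogL : 1 < Real.log L := by
    calc (1:ℝ) = Real.log (Real.exp 1) := (Real.log_exp 1).symm
    _ < Real.log L := Real.log_lt_log (Real.exp_pos 1) (lt_trans hTe hL)
  have hlogL0 : 0 < Real.log L := lt_trans one_pos hlogL
  have hμ : 1 / Real.log L ∈ Set.Ioc (0:ℝ) 1 := by
    constructor
    · positivity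
    · rw [div_le_one hlogL0]; linarith
  refine ⟨hμ, ?_⟩
  have h1 := hu _ hμ
  have hrpow : (1 / Real.log L) ^ (-(N : ℝ)) = Real.log L ^ N := by
    rw [one_div, Real.inv_rpow hlogL0.le, ← Real.rpow_neg hlogL0.le, neg_neg,
      Real.rpow_natCast]
  rw [hrpow] at h1
  have h2 : Real.log L ^ N ≤ L := by
    have := hM L (le_trans hTM hL.le)
    simpa [abs_of_pos hL0, abs_of_pos hlogL0, abs_of_nonneg (pow_nonneg hlogL0.le N)]
      using this
  calc ‖u (1 / Real.log L)‖ ≤ C₁ * Real.log L ^ N := h1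
    _ ≤ C₁ * L := by nlinarith
end

section
/- (Quantitative core of the existence theorem, Theorem 3.2.) Let T, c₀, C_{1/2} > 0 and set m = min(c₀/2, 1). Let u, c, b, g, f₁, f₂ : (0,1] → ℝ be nonnegative nets such that: c(ε) ≤ C_c ε^(−N_c), f₁(ε) ≤ C_{f₁} ε^(−N_{f₁}), f₂(ε) ≤ C_{f₂} ε^(−N_{f₂}), g(ε) ≤ C_g ε^(−N_g) for all ε ∈ (0,1] (with positive constants C and natural number exponents N), and b(ε) ≤ C_b log(1/ε) for all ε ∈ (0,1] with C_b > 0. Assume the energy inequality u(ε)² ≤ ( ((c(ε) + c₀ C_{1/2}(1+T))/m) · f₁(ε)² + f₂(ε)² + g(ε)² ) · exp( T (b(ε) + 1 + c₀ C_{1/2}(1+T))/m ) holds for all ε ∈ (0,1]. Then the net u is moderate: there exist C > 0 and a natural number N such that u(ε) ≤ C ε^(−N) for all ε ∈ (0,1]. -/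
set_option maxHeartbeats 1000000


open Set

/-- **Quantitative core of the existence theorem (Theorem 3.2).**
If the data nets `c, f₁, f₂, g` are moderate, `b` is moderate of log-type, and
the energy inequality holds, then the solution net `u` is moderate. -/
theorem very_weak_solution_moderate
    (T c₀ Chalf : ℝ) (hT : 0 < T) (hc₀ : 0 < c₀) (hChalf : 0 < Chalf)
    (u c b g f₁ f₂ : ℝ → ℝ)
    (hunn : ∀ ε ∈ Set.Ioc (0 : ℝ) 1, 0 ≤ u ε)
    (hcnn : ∀ ε ∈ Set.Ioc (0 : ℝ) 1, 0 ≤ c ε)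
    (hbnn : ∀ ε ∈ Set.Ioc (0 : ℝ) 1, 0 ≤ b ε)
    (hgnn : ∀ ε ∈ Set.Ioc (0 : ℝ) 1, 0 ≤ g ε)
    (hf₁nn : ∀ ε ∈ Set.Ioc (0 : ℝ) 1, 0 ≤ f₁ ε)
    (hf₂nn : ∀ ε ∈ Set.Ioc (0 : ℝ) 1, 0 ≤ f₂ ε)
    (Cc Cf₁ Cf₂ Cg Cb : ℝ) (Nc Nf₁ Nf₂ Ng : ℕ)
    (hCc : 0 < Cc) (hCf₁ : 0 < Cf₁) (hCf₂ : 0 < Cf₂) (hCg : 0 < Cg)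
    (hCb : 0 < Cb)
    (hc : ∀ ε ∈ Set.Ioc (0 : ℝ) 1, c ε ≤ Cc * ε ^ (-(Nc : ℝ)))
    (hf₁ : ∀ ε ∈ Set.Ioc (0 : ℝ) 1, f₁ ε ≤ Cf₁ * ε ^ (-(Nf₁ : ℝ)))
    (hf₂ : ∀ ε ∈ Set.Ioc (0 : ℝ) 1, f₂ ε ≤ Cf₂ * ε ^ (-(Nf₂ : ℝ)))
    (hg : ∀ ε ∈ Set.Ioc (0 : ℝ) 1, g ε ≤ Cg * ε ^ (-(Ng : ℝ)))
    (hb : ∀ ε ∈ Set.Ioc (0 : ℝ) 1, b ε ≤ Cb * Real.log (1 / ε))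
    (henergy : ∀ ε ∈ Set.Ioc (0 : ℝ) 1,
      u ε ^ 2 ≤
        (((c ε + c₀ * Chalf * (1 + T)) / min (c₀ / 2) 1) * f₁ ε ^ 2 +
            f₂ ε ^ 2 + g ε ^ 2) *
          Real.exp (T * ((b ε + 1 + c₀ * Chalf * (1 + T)) / min (c₀ / 2) 1))) :
    ∃ C > (0 : ℝ), ∃ N : ℕ, ∀ ε ∈ Set.Ioc (0 : ℝ) 1,
      u ε ≤ C * ε ^ (-(N : ℝ)) := by

  set m := min (c₀ / 2) 1 with hmdef
  have hm : 0 < m := lt_min (by linarith) one_pos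
  set A := c₀ * Chalf * (1 + T) with hAdef
  have hApos : 0 < A := by positivity
  obtain ⟨r, hrdef⟩ : ∃ r : ℝ, r = T * Cb / m := ⟨_, rfl⟩
  have hrpos : 0 < r := by rw [hrdef]; positivity
  obtain ⟨Nb, hNbdef⟩ : ∃ n : ℕ, (n : ℝ) = (⌈r⌉₊ : ℝ) := ⟨_, rfl⟩
  have hrNb : r ≤ (Nb : ℝ) := by rw [hNbdef]; exact Nat.le_ceil r
  obtain ⟨M₁, hM₁def⟩ : ∃ n : ℕ, n = Nc + 2 * Nf₁ + 2 * Nf₂ + 2 * Ng := ⟨_, rfl⟩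
  obtain ⟨B, hBdef⟩ : ∃ B : ℝ, B = (Cc + A) / m * Cf₁ ^ 2 + Cf₂ ^ 2 + Cg ^ 2 := ⟨_, rfl⟩
  have hBpos : 0 < B := by rw [hBdef]; positivity
  obtain ⟨E, hEdef⟩ : ∃ E : ℝ, E = Real.exp (T * (1 + A) / m) := ⟨_, rfl⟩
  have hEpos : 0 < E := hEdef ▸ Real.exp_pos _
  obtain ⟨K, hKdef⟩ : ∃ K : ℝ, K = B * E := ⟨_, rfl⟩
  have hKpos : 0 < K := by rw [hKdef]; positivity
  refine ⟨Real.sqrt K, Real.sqrt_pos.mpr hKpos, M₁ + Nb, ?_⟩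
  intro ε hε
  obtain ⟨hε0, hε1⟩ := hε
  have hεmem : ε ∈ Set.Ioc (0 : ℝ) 1 := ⟨hε0, hε1⟩
  -- basic rpow facts
  have hone : ∀ k : ℝ, 0 ≤ k → (1 : ℝ) ≤ ε ^ (-k) := fun k hk =>
    Real.one_le_rpow_of_pos_of_le_one_of_nonpos hε0 hε1 (by linarith)
  have hmono' : ∀ a b : ℝ, a ≤ b → ε ^ (-a) ≤ ε ^ (-b) := fun a b hab =>
    Real.rpow_le_rpow_of_exponent_ge hε0 hε1 (by linarith)
  have hmul : ∀ a b : ℝ, ε ^ (-a) * ε ^ (-b) = ε ^ (-(a + b)) := fun a b => by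
    rw [← Real.rpow_add hε0]; ring_nf
  have hsq : ∀ k : ℕ, (ε ^ (-(k : ℝ))) ^ 2 = ε ^ (-(2 * k : ℝ)) := fun k => by
    rw [sq, hmul]; ring_nf
  -- bound the squared data part
  have hf₁' : f₁ ε ^ 2 ≤ Cf₁ ^ 2 * ε ^ (-(2 * Nf₁ : ℝ)) := by
    have := pow_le_pow_left₀ (hf₁nn ε hεmem) (hf₁ ε hεmem) 2
    calc f₁ ε ^ 2 ≤ (Cf₁ * ε ^ (-(Nf₁ : ℝ))) ^ 2 := this
      _ = Cf₁ ^ 2 * ε ^ (-(2 * Nf₁ : ℝ)) := by rw [mul_pow, hsq]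
  have hf₂' : f₂ ε ^ 2 ≤ Cf₂ ^ 2 * ε ^ (-(2 * Nf₂ : ℝ)) := by
    have := pow_le_pow_left₀ (hf₂nn ε hεmem) (hf₂ ε hεmem) 2
    calc f₂ ε ^ 2 ≤ (Cf₂ * ε ^ (-(Nf₂ : ℝ))) ^ 2 := this
      _ = Cf₂ ^ 2 * ε ^ (-(2 * Nf₂ : ℝ)) := by rw [mul_pow, hsq]
  have hg' : g ε ^ 2 ≤ Cg ^ 2 * ε ^ (-(2 * Ng : ℝ)) := by
    have := pow_le_pow_left₀ (hgnn ε hεmem) (hg ε hεmem) 2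
    calc g ε ^ 2 ≤ (Cg * ε ^ (-(Ng : ℝ))) ^ 2 := this
      _ = Cg ^ 2 * ε ^ (-(2 * Ng : ℝ)) := by rw [mul_pow, hsq]
  have hc' : c ε + A ≤ (Cc + A) * ε ^ (-(Nc : ℝ)) := by
    have h1 : c ε ≤ Cc * ε ^ (-(Nc : ℝ)) := hc ε hεmem
    have h2 : A ≤ A * ε ^ (-(Nc : ℝ)) := le_mul_of_one_le_right hApos.le (hone _ (Nat.cast_nonneg _))
    nlinarith
  have hεnn : ∀ a : ℝ, 0 ≤ ε ^ (-a) := fun a => (Real.rpow_pos_of_pos hε0 _).le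
  have hS : ((c ε + A) / m) * f₁ ε ^ 2 + f₂ ε ^ 2 + g ε ^ 2 ≤ B * ε ^ (-(M₁ : ℝ)) := by
    have e1 : ((c ε + A) / m) * f₁ ε ^ 2 ≤ ((Cc + A) / m * Cf₁ ^ 2) * ε ^ (-(M₁ : ℝ)) := by
      have step : ((c ε + A) / m) * f₁ ε ^ 2 ≤
          ((Cc + A) * ε ^ (-(Nc : ℝ)) / m) * (Cf₁ ^ 2 * ε ^ (-(2 * Nf₁ : ℝ))) := by
        apply mul_le_mul ((div_le_div_iff_of_pos_right hm).mpr hc') hf₁' (sq_nonneg _)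
        positivity
      refine step.trans ?_
      have : ((Cc + A) * ε ^ (-(Nc : ℝ)) / m) * (Cf₁ ^ 2 * ε ^ (-(2 * Nf₁ : ℝ)))
          = ((Cc + A) / m * Cf₁ ^ 2) * ε ^ (-((Nc : ℝ) + 2 * Nf₁)) := by
        rw [← hmul]; ring
      rw [this]
      apply mul_le_mul_of_nonneg_left _ (by positivity)
      apply hmono'
      have : ((M₁ : ℝ)) = (Nc : ℝ) + 2 * Nf₁ + 2 * Nf₂ + 2 * Ng := by
        rw [hM₁def]; push_cast; ring
      rw [this]
      have h2 : (0:ℝ) ≤ (Nf₂ : ℝ) := Nat.cast_nonneg _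
      have h3 : (0:ℝ) ≤ (Ng : ℝ) := Nat.cast_nonneg _
      linarith
    have e2 : f₂ ε ^ 2 ≤ Cf₂ ^ 2 * ε ^ (-(M₁ : ℝ)) := by
      refine hf₂'.trans (mul_le_mul_of_nonneg_left (hmono' _ _ ?_) (by positivity))
      rw [hM₁def]; push_cast
      have h1 : (0:ℝ) ≤ (Nc : ℝ) := Nat.cast_nonneg _
      have h3 : (0:ℝ) ≤ (Ng : ℝ) := Nat.cast_nonneg _
      have h4 : (0:ℝ) ≤ (Nf₁ : ℝ) := Nat.cast_nonneg _
      linarith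
    have e3 : g ε ^ 2 ≤ Cg ^ 2 * ε ^ (-(M₁ : ℝ)) := by
      refine hg'.trans (mul_le_mul_of_nonneg_left (hmono' _ _ ?_) (by positivity))
      rw [hM₁def]; push_cast
      have h1 : (0:ℝ) ≤ (Nc : ℝ) := Nat.cast_nonneg _
      have h2 : (0:ℝ) ≤ (Nf₂ : ℝ) := Nat.cast_nonneg _
      have h4 : (0:ℝ) ≤ (Nf₁ : ℝ) := Nat.cast_nonneg _
      linarith
    calc ((c ε + A) / m) * f₁ ε ^ 2 + f₂ ε ^ 2 + g ε ^ 2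
        ≤ ((Cc + A) / m * Cf₁ ^ 2) * ε ^ (-(M₁ : ℝ)) + Cf₂ ^ 2 * ε ^ (-(M₁ : ℝ))
            + Cg ^ 2 * ε ^ (-(M₁ : ℝ)) := by gcongr
      _ = B * ε ^ (-(M₁ : ℝ)) := by rw [hBdef]; ring
  -- bound the exponential part
  have hexp : Real.exp (T * ((b ε + 1 + A) / m)) ≤ E * ε ^ (-(Nb : ℝ)) := by
    have hlog : Real.log (1 / ε) = -Real.log ε := by rw [one_div, Real.log_inv]
    have h1 : T * ((b ε + 1 + A) / m) ≤ r * (-Real.log ε) + T * (1 + A) / m := by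
      have hbb : b ε ≤ Cb * (-Real.log ε) := by
        have := hb ε hεmem; rwa [hlog] at this
      rw [hrdef]
      have hTm : 0 < T / m := by positivity
      calc T * ((b ε + 1 + A) / m) = T / m * b ε + T * (1 + A) / m := by ring
        _ ≤ T / m * (Cb * (-Real.log ε)) + T * (1 + A) / m := by
            have := mul_le_mul_of_nonneg_left hbb hTm.le
            linarith
        _ = T * Cb / m * (-Real.log ε) + T * (1 + A) / m := by ring
    have h2 : Real.exp (r * (-Real.log ε) + T * (1 + A) / m)
        = E * ε ^ (-r) := by
      rw [Real.exp_add, Real.rpow_def_of_pos hε0, hEdef]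
      ring_nf
    calc Real.exp (T * ((b ε + 1 + A) / m)) ≤ Real.exp (r * (-Real.log ε) + T * (1 + A) / m) :=
          Real.exp_le_exp.mpr h1
      _ = E * ε ^ (-r) := h2
      _ ≤ E * ε ^ (-(Nb : ℝ)) := by
          apply mul_le_mul_of_nonneg_left (hmono' _ _ hrNb) hEpos.le
  -- combine
  have hSnn : 0 ≤ ((c ε + A) / m) * f₁ ε ^ 2 + f₂ ε ^ 2 + g ε ^ 2 := by
    have := hcnn ε hεmem
    have := sq_nonneg (f₁ ε); have := sq_nonneg (f₂ ε); have := sq_nonneg (g ε)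
    have : 0 ≤ (c ε + A) / m := by positivity
    positivity
  have hu2 : u ε ^ 2 ≤ K * ε ^ (-((M₁ : ℝ) + Nb)) := by
    calc u ε ^ 2 ≤ (((c ε + A) / m) * f₁ ε ^ 2 + f₂ ε ^ 2 + g ε ^ 2) *
          Real.exp (T * ((b ε + 1 + A) / m)) := henergy ε hεmem
      _ ≤ (B * ε ^ (-(M₁ : ℝ))) * (E * ε ^ (-(Nb : ℝ))) :=
          mul_le_mul hS hexp (Real.exp_pos _).le (by positivity)
      _ = K * ε ^ (-((M₁ : ℝ) + Nb)) := by rw [← hmul, hKdef]; ring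
  have hNcast : (((M₁ + Nb : ℕ) : ℝ)) = (M₁ : ℝ) + Nb := by push_cast; ring
  have hfin : u ε ≤ Real.sqrt K * ε ^ (-((M₁ + Nb : ℕ) : ℝ)) := by
    rw [hNcast]
    have h1 : u ε = Real.sqrt (u ε ^ 2) := (Real.sqrt_sq (hunn ε hεmem)).symm
    rw [h1]
    calc Real.sqrt (u ε ^ 2) ≤ Real.sqrt (K * ε ^ (-((M₁ : ℝ) + Nb))) :=
          Real.sqrt_le_sqrt hu2
      _ = Real.sqrt K * Real.sqrt (ε ^ (-((M₁ : ℝ) + Nb))) := Real.sqrt_mul hKpos.le _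
      _ ≤ Real.sqrt K * ε ^ (-((M₁ : ℝ) + Nb)) := by
          apply mul_le_mul_of_nonneg_left ?_ (Real.sqrt_nonneg _)
          set y : ℝ := ε ^ (-((M₁ : ℝ) + Nb)) with hy
          have hy1 : (1:ℝ) ≤ y := hone _ (by positivity)
          calc Real.sqrt y ≤ Real.sqrt (y ^ 2) := Real.sqrt_le_sqrt (by nlinarith)
            _ = y := Real.sqrt_sq (by linarith)
  exact hfin
end
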